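/- For a natural number m ≥ 0, there exist k ≥ 1 and natural numbers 0 ≤ n_1 ≤ n_2 ≤ ... ≤ n_k such that L_{n_1}·L_{n_2}·...·L_{n_k} + 1 = L_m^2 if and only if m = 0, m = 2, or m = 4. -/

import Mathlib

def lucas : ℕ → ℕ
  | 0 => 2
  | 1 => 1
  | n + 2 => lucas (n + 1) + lucas n

theorem lucas_rec (n : ℕ) : lucas (n+2) = lucas (n+1) + lucas n := rfl

theorem two_step {P : ℕ → Prop} (h0 : P 0) (h1 : P 1)
    (step : ∀ n, P n → P (n+1) → P (n+2)) : ∀ n, P n := by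
  have key : ∀ n, P n ∧ P (n+1) := by
    intro n
    induction n with
    | zero => exact ⟨h0, h1⟩
    | succ k ih => exact ⟨ih.2, step k ih.1 ih.2⟩
  exact fun n => (key n).1

theorem lucas_pos : ∀ n, 0 < lucas n := by
  refine two_step (by norm_num [lucas]) (by norm_num [lucas]) ?_
  intro n h1 h2
  rw [lucas_rec]; omega

theorem lucas_le_succ (n : ℕ) (h : 1 ≤ n) : lucas n ≤ lucas (n+1) := by
  obtain ⟨k, rfl⟩ : ∃ k, n = k + 1 := ⟨n-1, by omega⟩
  rw [lucas_rec]
  have := lucas_pos k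
  omega

theorem lucas_mono {u v : ℕ} (h1 : 1 ≤ u) (h : u ≤ v) : lucas u ≤ lucas v := by
  induction v, h using Nat.le_induction with
  | base => exact le_refl _
  | succ v hv ih => exact le_trans ih (lucas_le_succ v (by omega))

theorem lucas_recz (n : ℕ) : ((lucas (n+2) : ℤ)) = lucas (n+1) + lucas n := by
  rw [lucas_rec]; push_cast; ring

theorem lucas_inv (n : ℕ) :
    ((lucas (n+1) : ℤ))^2 - (lucas (n+1) : ℤ) * lucas n - ((lucas n : ℤ))^2 = 5 * (-1)^(n+1) := by
  induction n with
  | zero => norm_num [lucas]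
  | succ k ih =>
    rw [lucas_recz]
    linear_combination (-1 : ℤ) * ih

theorem lucas_dbl : ∀ a : ℕ, ((lucas (2*a) : ℤ)) = (lucas a : ℤ)^2 - 2*(-1)^a ∧
    ((lucas (2*a+1) : ℤ)) = (lucas a : ℤ) * lucas (a+1) - (-1)^a := by
  intro a
  induction a with
  | zero => norm_num [lucas]
  | succ k ih =>
    obtain ⟨ih1, ih2⟩ := ih
    have e1 : ((lucas (2*k+2) : ℤ)) = lucas (2*k+1) + lucas (2*k) := lucas_recz (2*k)
    have e2 : ((lucas (2*k+3) : ℤ)) = lucas (2*k+2) + lucas (2*k+1) := lucas_recz (2*k+1)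
    have hinv := lucas_inv k
    constructor
    · have h : 2*(k+1) = 2*k+2 := by ring
      rw [h, e1, ih1, ih2]
      linear_combination -hinv
    · have h : 2*(k+1)+1 = 2*k+3 := by ring
      rw [h, e2, e1, ih1, ih2, lucas_recz k]
      linear_combination -hinv

theorem lucas_addf (r : ℕ) : ∀ d : ℕ,
    ((lucas (2*r+d) : ℤ)) = (lucas (r+d) : ℤ) * lucas r - (-1)^r * lucas d := by
  refine two_step ?_ ?_ ?_
  · simp only [Nat.add_zero]
    rw [(lucas_dbl r).1]
    have h0 : ((lucas 0 : ℤ)) = 2 := by norm_num [lucas]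
    rw [h0]; ring
  · rw [(lucas_dbl r).2]
    have h1 : ((lucas 1 : ℤ)) = 1 := by norm_num [lucas]
    rw [h1]; ring
  · intro d hd hd1
    have e1 : 2*r+(d+1) = 2*r+d+1 := by ring
    have e2 : r+(d+1) = r+d+1 := by ring
    rw [e1, e2] at hd1
    have e3 : 2*r+(d+2) = (2*r+d)+2 := by ring
    have e4 : r+(d+2) = (r+d)+2 := by ring
    rw [e3, e4, lucas_recz (2*r+d), lucas_recz (r+d), lucas_recz d, hd, hd1]
    ring

theorem lucas_quasi (a y : ℕ) :
    ((lucas a : ℤ)) ∣ ((lucas (2*a + y) : ℤ)) - (-1)^(a+1) * lucas y :=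
  ⟨(lucas (a+y) : ℤ), by rw [lucas_addf a y]; ring⟩

theorem lucas_iter (a : ℕ) : ∀ j x : ℕ,
    ((lucas a : ℤ)) ∣ ((lucas (2*a*j + x) : ℤ)) - (-1)^((a+1)*j) * lucas x := by
  intro j
  induction j with
  | zero => intro x; simp
  | succ k ih =>
    intro x
    have h1 := lucas_quasi a (2*a*k + x)
    have h2 := ih x
    have e : 2*a*(k+1) + x = 2*a + (2*a*k + x) := by ring
    have ep : (a+1)*(k+1) = (a+1)*k + (a+1) := by ring
    have key : ((lucas (2*a*(k+1) + x) : ℤ)) - (-1)^((a+1)*(k+1)) * lucas x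
        = (((lucas (2*a + (2*a*k+x)) : ℤ)) - (-1)^(a+1) * lucas (2*a*k+x))
          + (-1)^(a+1) * (((lucas (2*a*k+x) : ℤ)) - (-1)^((a+1)*k) * lucas x) := by
      rw [e, ep, pow_add]; ring
    rw [key]
    exact dvd_add h1 (Dvd.dvd.mul_left h2 _)

theorem lucas_finisher (b t : ℕ) (δ : ℤ) (hb : 2 ≤ b) (ht : t ≤ b + 2)
    (hte : t % 2 = 0) (hδ : δ = 1 ∨ δ = -1)
    (hdvd : ((lucas (b+2) : ℤ)) ∣ δ * lucas t + 1) : False := by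
  have h7 : 7 ≤ lucas (b+2) := by
    have : lucas 4 ≤ lucas (b+2) := lucas_mono (by omega) (by omega)
    have h4 : lucas 4 = 7 := rfl
    omega
  rcases Nat.lt_or_ge t (b+2) with hlt | hge
  · -- t ≤ b+1
    have h2t : 2 ≤ lucas t := by
      rcases Nat.eq_zero_or_pos t with rfl | hp
      · exact le_refl _
      · have h2 : lucas 2 = 3 := rfl
        have := lucas_mono (u := 2) (by omega) (by omega : 2 ≤ t)
        omega
    have hub : lucas t ≤ lucas (b+1) := by
      rcases Nat.eq_zero_or_pos t with rfl | hp
      · have : lucas 2 ≤ lucas (b+1) := lucas_mono (by omega) (by omega)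
        have h2 : lucas 2 = 3 := rfl
        have h0 : lucas 0 = 2 := rfl
        omega
      · exact lucas_mono (by omega) (by omega)
    have hsum : lucas (b+2) = lucas (b+1) + lucas b := lucas_rec b
    have hb3 : 3 ≤ lucas b := by
      have := lucas_mono (u := 2) (by omega) (by omega : 2 ≤ b)
      have h2 : lucas 2 = 3 := rfl
      omega
    rcases hδ with rfl | rfl
    · rw [one_mul] at hdvd
      have hle := Int.le_of_dvd (by positivity) hdvd
      have : lucas (b+2) ≤ lucas t + 1 := by exact_mod_cast hle
      omega
    · have hdvd' : ((lucas (b+2) : ℤ)) ∣ (lucas t : ℤ) - 1 := by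
        have := (dvd_neg.mpr hdvd)
        simpa [neg_add_eq_sub] using this
      have hpos : (0:ℤ) < (lucas t : ℤ) - 1 := by
        have : (2:ℤ) ≤ (lucas t : ℤ) := by exact_mod_cast h2t
        linarith
      have hle := Int.le_of_dvd hpos hdvd'
      have : lucas (b+2) ≤ lucas t := by
        have h := hle
        have : ((lucas (b+2) : ℤ)) ≤ (lucas t : ℤ) := by linarith
        exact_mod_cast this
      omega
  · -- t = b + 2
    have hteq : t = b + 2 := by omega
    subst hteq
    have h1 : ((lucas (b+2) : ℤ)) ∣ 1 := by
      have h2 : ((lucas (b+2) : ℤ)) ∣ δ * lucas (b+2) := Dvd.dvd.mul_left dvd_rfl δ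
      have := dvd_sub hdvd h2
      simpa using this
    have := Int.le_of_dvd one_pos h1
    have : lucas (b+2) ≤ 1 := by exact_mod_cast this
    omega

theorem lucas_main_div (a m : ℕ) (ha : 4 ≤ a) (hm : m % 2 = 0) :
    ¬ ((lucas a : ℤ) ∣ ((lucas m : ℤ))^2 - 1) := by
  intro hdvd
  obtain ⟨b, rfl⟩ : ∃ b, a = b + 2 := ⟨a - 2, by omega⟩
  set a := b + 2 with ha_def
  have hmeven : Even m := Nat.even_iff.mpr hm
  have hneg1 : ((-1 : ℤ))^m = 1 := Even.neg_one_pow hmeven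
  have hL2m : ((lucas (2*m) : ℤ)) = (lucas m : ℤ)^2 - 2 := by
    have := (lucas_dbl m).1
    rw [hneg1] at this
    linarith
  have hdvd' : (lucas a : ℤ) ∣ ((lucas (2*m) : ℤ)) + 1 := by
    rw [hL2m]
    have : (lucas m : ℤ)^2 - 2 + 1 = (lucas m : ℤ)^2 - 1 := by ring
    rw [this]; exact hdvd
  set j := 2*m / (2*a) with hj
  set s := 2*m % (2*a) with hs
  have hsm : 2*a*j + s = 2*m := Nat.div_add_mod (2*m) (2*a)
  have hslt : s < 2*a := Nat.mod_lt _ (by omega)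
  have hse : s % 2 = 0 := by
    have h1 : (2*m) % (2*a) % 2 = 2*m % 2 := Nat.mod_mod_of_dvd (2*m) ⟨a, rfl⟩
    omega
  have hiter := lucas_iter a j s
  rw [hsm] at hiter
  set ε : ℤ := (-1)^((a+1)*j) with hε
  have hεpm : ε = 1 ∨ ε = -1 := by
    rcases Nat.even_or_odd ((a+1)*j) with h | h
    · exact Or.inl (Even.neg_one_pow h)
    · exact Or.inr (Odd.neg_one_pow h)
  have key : (lucas a : ℤ) ∣ ε * lucas s + 1 := by
    have := dvd_sub hdvd' hiter
    have e : ((lucas (2*m) : ℤ)) + 1 - (((lucas (2*m) : ℤ)) - ε * lucas s) = ε * lucas s + 1 := by ring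
    rwa [e] at this
  rcases le_or_gt s a with hsa | hsa
  · exact lucas_finisher b s ε (by omega) (by omega) hse hεpm key
  · -- fold : s = a + r with r = s - a, 1 ≤ r < a
    set r := s - a with hr
    have hra : r ≤ a := by omega
    have hfold : ((lucas s : ℤ)) = (lucas a : ℤ) * lucas r - (-1)^r * lucas (a - r) := by
      have := lucas_addf r (a - r)
      have e1 : 2*r + (a - r) = s := by omega
      have e2 : r + (a - r) = a := by omega
      rw [e1, e2] at this
      exact this
    set δ : ℤ := -ε * (-1)^r with hδ
    have hpowr : ((-1:ℤ))^r = 1 ∨ ((-1:ℤ))^r = -1 := by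
      rcases Nat.even_or_odd r with h | h
      · exact Or.inl (Even.neg_one_pow h)
      · exact Or.inr (Odd.neg_one_pow h)
    have hδpm : δ = 1 ∨ δ = -1 := by
      rcases hεpm with h | h <;> rcases hpowr with h2 | h2 <;> rw [hδ, h, h2] <;> norm_num
    have key2 : (lucas a : ℤ) ∣ δ * lucas (a - r) + 1 := by
      have hmul : (lucas a : ℤ) ∣ ε * ((lucas a : ℤ) * lucas r) := ⟨ε * lucas r, by ring⟩
      have := dvd_sub key hmul
      have e : ε * (lucas s : ℤ) + 1 - ε * ((lucas a : ℤ) * lucas r) = δ * lucas (a - r) + 1 := by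
        rw [hfold, hδ]; ring
      rwa [e] at this
    have har2 : (a - r) % 2 = 0 := by omega
    exact lucas_finisher b (a - r) δ (by omega) (by omega) har2 hδpm key2

theorem pow3_mod8 (b : ℕ) : 3^b % 8 = 1 ∨ 3^b % 8 = 3 := by
  induction b with
  | zero => left; rfl
  | succ k ih =>
    have h : 3^(k+1) % 8 = (3 * (3^k % 8)) % 8 := by
      rw [pow_succ]; rw [Nat.mul_mod]; ring_nf
    omega

theorem pow3_mod16 (b : ℕ) : (b % 4 = 0 ∧ 3^b % 16 = 1) ∨ (b % 4 = 1 ∧ 3^b % 16 = 3)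
    ∨ (b % 4 = 2 ∧ 3^b % 16 = 9) ∨ (b % 4 = 3 ∧ 3^b % 16 = 11) := by
  induction b with
  | zero => left; exact ⟨rfl, rfl⟩
  | succ k ih =>
    have h : 3^(k+1) % 16 = (3 * (3^k % 16)) % 16 := by
      rw [pow_succ]; rw [Nat.mul_mod]; ring_nf
    omega

theorem catalan1 (b s : ℕ) (h : 3^b + 1 = 2^s) : s = 1 ∨ s = 2 := by
  rcases le_or_gt s 2 with hs | hs
  · interval_cases s
    · have hb := Nat.one_le_pow b 3 (by norm_num)
      simp at h
    · omega
    · omega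
  · exfalso
    have h8 : (8 : ℕ) ∣ 2^s := by
      have : (2:ℕ)^3 ∣ 2^s := pow_dvd_pow 2 (by omega)
      simpa using this
    have := pow3_mod8 b
    omega

theorem catalan2 (d s : ℕ) (h : 3^d = 2^s + 1) : s = 1 ∨ s = 3 := by
  have h3d : d = 0 ∨ (3:ℕ) ∣ 3^d := by
    rcases Nat.eq_zero_or_pos d with rfl | hd
    · left; rfl
    · right; exact dvd_pow_self 3 (by omega)
  rcases le_or_gt s 3 with hs | hs
  · interval_cases s
    · -- 3^d = 2
      exfalso
      rcases h3d with rfl | h3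
      · simp at h
      · omega
    · omega
    · -- 3^d = 5
      exfalso
      rcases h3d with rfl | h3
      · simp at h
      · norm_num at h; omega
    · omega
  · exfalso
    have h16 : (16 : ℕ) ∣ 2^s := by
      have : (2:ℕ)^4 ∣ 2^s := pow_dvd_pow 2 (by omega)
      simpa using this
    have htab := pow3_mod16 d
    have hd4 : d % 4 = 0 := by omega
    obtain ⟨e, rfl⟩ := Nat.dvd_of_mod_eq_zero hd4
    have h81 : (3:ℕ)^(4*e) % 5 = 1 := by
      rw [pow_mul]
      rw [Nat.pow_mod]
      norm_num
    have h5 : (5:ℕ) ∣ 2^s := by omega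
    have := Nat.Prime.dvd_of_dvd_pow (p := 5) (by norm_num) h5
    omega

theorem sq_eq_pow23_add_one (x α β : ℕ) (h : x^2 = 2^α * 3^β + 1) :
    x = 2 ∨ x = 3 ∨ x = 5 ∨ x = 7 ∨ x = 17 := by
  have h2pos : 0 < 2^α := Nat.pow_pos (by norm_num)
  have h3pos : 0 < 3^β := Nat.pow_pos (by norm_num)
  have hx2 : 2 ≤ x := by
    by_contra hx
    interval_cases x <;> simp_all
  obtain ⟨y, rfl⟩ : ∃ y, x = y + 1 := ⟨x - 1, by omega⟩
  have hy1 : 1 ≤ y := by omega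
  have hprod : y * (y + 2) = 2^α * 3^β := by nlinarith [h]
  have hdu : y ∣ 2^α * 3^β := hprod ▸ dvd_mul_right y (y+2)
  have hdw : (y+2) ∣ 2^α * 3^β := hprod ▸ dvd_mul_left (y+2) y
  rcases Nat.even_or_odd y with hye | hyo
  · -- y even, x odd
    have hy2 : y % 2 = 0 := Nat.even_iff.mp hye
    have hy2' : 2 ≤ y := by omega
    right
    by_cases h3 : (3:ℕ) ∣ y
    · -- w = y + 2 is a power of 2
      have h3w : ¬ (3:ℕ) ∣ (y+2) := by omega
      have hcop : Nat.Coprime (y+2) (3^β) :=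
        Nat.Coprime.pow_right β (((Nat.prime_three).coprime_iff_not_dvd.mpr h3w).symm)
      have hw2 : (y+2) ∣ 2^α := hcop.dvd_of_dvd_mul_right hdw
      obtain ⟨c, hc, hw⟩ := (Nat.dvd_prime_pow Nat.prime_two).mp hw2
      have hc2 : 2 ≤ c := by
        by_contra hcc
        interval_cases c <;> simp_all <;> omega
      obtain ⟨e, rfl⟩ : ∃ e, c = e + 1 := ⟨c - 1, by omega⟩
      have he1 : 1 ≤ e := by omega
      have h2e : 2^(e+1) = 2 * 2^e := by rw [pow_succ]; ring
      have h2e2 : 2 ≤ 2^e := by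
        calc 2 = 2^1 := rfl
        _ ≤ 2^e := Nat.pow_le_pow_right (by norm_num) he1
      set o := 2^e - 1 with ho
      have hyo : y = 2 * o := by omega
      have hodd : o % 2 = 1 := by
        have : 2^e % 2 = 0 := by
          have : (2:ℕ) ∣ 2^e := dvd_pow_self 2 (by omega)
          omega
        omega
      have hoy : o ∣ y := ⟨2, by omega⟩
      have hod : o ∣ 2^α * 3^β := hoy.trans hdu
      have hcop2 : Nat.Coprime o (2^α) :=
        Nat.Coprime.pow_right α (((Nat.prime_two).coprime_iff_not_dvd.mpr (by omega)).symm)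
      have ho3 : o ∣ 3^β := hcop2.dvd_of_dvd_mul_left hod
      obtain ⟨bb, hbb, hob⟩ := (Nat.dvd_prime_pow Nat.prime_three).mp ho3
      have hcat := catalan1 bb e (by omega)
      rcases hcat with rfl | rfl
      · left; norm_num at hw; omega
      · right; right; left; norm_num at hw; omega
    · -- u = y is a power of 2
      have hcop : Nat.Coprime y (3^β) :=
        Nat.Coprime.pow_right β (((Nat.prime_three).coprime_iff_not_dvd.mpr h3).symm)
      have hu2 : y ∣ 2^α := hcop.dvd_of_dvd_mul_right hdu
      obtain ⟨a, ha, hu⟩ := (Nat.dvd_prime_pow Nat.prime_two).mp hu2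
      have ha1 : 1 ≤ a := by
        by_contra hcc
        interval_cases a <;> simp_all <;> omega
      rcases Nat.eq_or_lt_of_le ha1 with ha1' | ha2
      · -- a = 1, y = 2, x = 3
        left; rw [← ha1'] at hu; norm_num at hu; omega
      · obtain ⟨f, rfl⟩ : ∃ f, a = f + 1 := ⟨a - 1, by omega⟩
        have hf1 : 1 ≤ f := by omega
        have h2f : 2^(f+1) = 2 * 2^f := by rw [pow_succ]; ring
        have h2f2 : 2 ≤ 2^f := by
          calc 2 = 2^1 := rfl
          _ ≤ 2^f := Nat.pow_le_pow_right (by norm_num) hf1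
        set o := 2^f + 1 with ho
        have hwo : y + 2 = 2 * o := by omega
        have hodd : o % 2 = 1 := by
          have : 2^f % 2 = 0 := by
            have : (2:ℕ) ∣ 2^f := dvd_pow_self 2 (by omega)
            omega
          omega
        have how : o ∣ (y+2) := ⟨2, by omega⟩
        have hod : o ∣ 2^α * 3^β := how.trans hdw
        have hcop2 : Nat.Coprime o (2^α) :=
          Nat.Coprime.pow_right α (((Nat.prime_two).coprime_iff_not_dvd.mpr (by omega)).symm)
        have ho3 : o ∣ 3^β := hcop2.dvd_of_dvd_mul_left hod
        obtain ⟨d, hd, hod'⟩ := (Nat.dvd_prime_pow Nat.prime_three).mp ho3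
        have hcat := catalan2 d f (by omega)
        rcases hcat with rfl | rfl
        · right; left; norm_num at hu; omega
        · right; right; right; norm_num at hu; omega
  · -- y odd, x even : α = 0, powers of 3 differing by 2
    have hy2 : y % 2 = 1 := Nat.odd_iff.mp hyo
    have hodd : (2^α * 3^β) % 2 = 1 := by
      have hm : (y * (y+2)) % 2 = 1 := by
        rw [Nat.mul_mod, hy2]
        have h2 : (y+2) % 2 = 1 := by omega
        rw [h2]
      rw [← hprod]; exact hm
    have hα : α = 0 := by
      by_contra hne
      have h1 : (2:ℕ) ∣ 2^α := dvd_pow_self 2 (by omega)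
      have h2 : (2:ℕ) ∣ 2^α * 3^β := h1.mul_right _
      omega
    subst hα
    rw [pow_zero, one_mul] at hdu hdw
    obtain ⟨i, hi, hiy⟩ := (Nat.dvd_prime_pow Nat.prime_three).mp hdu
    obtain ⟨jj, hj, hw⟩ := (Nat.dvd_prime_pow Nat.prime_three).mp hdw
    have hi0 : i = 0 := by
      by_contra hne
      have h3i : (3:ℕ) ∣ 3^i := dvd_pow_self 3 hne
      have hjne : jj ≠ 0 := by
        intro h0
        subst h0
        norm_num at hw
        omega
      have h3j : (3:ℕ) ∣ 3^jj := dvd_pow_self 3 hjne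
      omega
    subst hi0
    norm_num at hiy
    left; omega

theorem lucas_mod5 : ∀ n : ℕ, (n % 4 = 0 ∧ lucas n % 5 = 2) ∨ (n % 4 = 1 ∧ lucas n % 5 = 1)
    ∨ (n % 4 = 2 ∧ lucas n % 5 = 3) ∨ (n % 4 = 3 ∧ lucas n % 5 = 4) := by
  refine two_step ?_ ?_ ?_
  · left; exact ⟨rfl, rfl⟩
  · right; left; exact ⟨rfl, rfl⟩
  · intro n hn hn1
    have hrec : lucas (n+2) % 5 = (lucas (n+1) % 5 + lucas n % 5) % 5 := by
      rw [lucas_rec, Nat.add_mod]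
    omega

theorem five_not_dvd_lucas (n : ℕ) : lucas n % 5 ≠ 0 := by
  have := lucas_mod5 n
  omega

theorem five_not_dvd_prod (L : List ℕ) : ¬ ((5:ℕ) ∣ (L.map lucas).prod) := by
  induction L with
  | nil => simp
  | cons a t ih =>
    simp only [List.map_cons, List.prod_cons]
    intro hdvd
    rcases (Nat.Prime.dvd_mul (by norm_num)).mp hdvd with h | h
    · have := five_not_dvd_lucas a
      omega
    · exact ih h

theorem lucas_small_prod : ∀ (L : List ℕ), (∀ n ∈ L, n ≤ 3) →
    ∃ α β, (L.map lucas).prod = 2^α * 3^β := by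
  intro L
  induction L with
  | nil => exact fun _ => ⟨0, 0, rfl⟩
  | cons a t ih =>
    intro hsmall
    obtain ⟨α, β, hαβ⟩ := ih (fun n hn => hsmall n (List.mem_cons_of_mem a hn))
    have ha : a ≤ 3 := hsmall a (List.mem_cons_self)
    simp only [List.map_cons, List.prod_cons, hαβ]
    interval_cases a
    · exact ⟨α + 1, β, by rw [pow_succ]; show 2 * (2^α * 3^β) = 2^α * 2 * 3^β; ring⟩
    · exact ⟨α, β, by show 1 * (2^α * 3^β) = 2^α * 3^β; ring⟩
    · exact ⟨α, β + 1, by rw [pow_succ]; show 3 * (2^α * 3^β) = 2^α * (3^β * 3); ring⟩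
    · exact ⟨α + 2, β, by show 4 * (2^α * 3^β) = 2^(α+2) * 3^β; rw [pow_add]; ring⟩

theorem lucas_prod_add_one_eq_lucas_sq_iff (m : ℕ) :
    (∃ l : List ℕ, l ≠ [] ∧ l.Pairwise (· ≤ ·) ∧
        (l.map lucas).prod + 1 = lucas m ^ 2) ↔
      (m = 0 ∨ m = 2 ∨ m = 4) := by
  constructor
  · rintro ⟨L, hne, hsorted, hprod⟩
    rcases Nat.even_or_odd m with he | ho
    · -- m even
      have hm : m % 2 = 0 := Nat.even_iff.mp he
      have hsmall : ∀ n ∈ L, n ≤ 3 := by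
        intro n hn
        by_contra hbig
        have h4 : 4 ≤ n := by omega
        have hd : lucas n ∣ (L.map lucas).prod := List.dvd_prod (List.mem_map_of_mem (f := lucas) hn)
        have hPz : ((L.map lucas).prod : ℤ) + 1 = ((lucas m : ℤ))^2 := by exact_mod_cast hprod
        have hdz : ((lucas n : ℤ)) ∣ ((lucas m : ℤ))^2 - 1 := by
          have h1 : ((lucas n : ℤ)) ∣ ((L.map lucas).prod : ℤ) := Int.natCast_dvd_natCast.mpr hd
          have h2 : ((lucas m : ℤ))^2 - 1 = ((L.map lucas).prod : ℤ) := by linarith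
          rwa [h2]
        exact lucas_main_div n m h4 hm hdz
      obtain ⟨α, β, hαβ⟩ := lucas_small_prod L hsmall
      have key : (lucas m)^2 = 2^α * 3^β + 1 := by rw [← hprod, hαβ]
      have hval := sq_eq_pow23_add_one (lucas m) α β key
      rcases le_or_gt m 5 with hm5 | hm6
      · interval_cases m
        · left; rfl
        · exfalso; simp at hm
        · right; left; rfl
        · exfalso
          have h3 : lucas 3 = 4 := rfl
          omega
        · right; right; rfl
        · exfalso; simp at hm
      · exfalso
        have h18 : 18 ≤ lucas m := by
          have := lucas_mono (u := 6) (by omega) (by omega : 6 ≤ m)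
          have h6 : lucas 6 = 18 := rfl
          omega
        omega
    · -- m odd
      exfalso
      have hmo : m % 2 = 1 := Nat.odd_iff.mp ho
      have htab := lucas_mod5 m
      have hsq : (lucas m)^2 % 5 = 1 := by
        have h14 : lucas m % 5 = 1 ∨ lucas m % 5 = 4 := by omega
        rw [Nat.pow_mod]
        rcases h14 with h | h <;> rw [h]
      have h5 : (5:ℕ) ∣ (L.map lucas).prod := by omega
      exact five_not_dvd_prod L h5
  · rintro (rfl | rfl | rfl)
    · exact ⟨[2], by simp, by simp, by decide⟩
    · exact ⟨[0, 3], by simp, by decide, by decide⟩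
    · exact ⟨[2, 3, 3], by simp, by decide, by decide⟩
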